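/- Let H be a Hadamard matrix of order n and m an integer with n ≥ m > 1. Then the mean value of det(M)² over all m × m submatrices M of H is strictly greater than m!. Equivalently, the sum of det(M)² over all C(n,m)² submatrices of order m is strictly greater than m! · C(n,m)². -/
import Mathlib


open Matrix Finset Equiv

section Aux

variable {m n : ℕ}

/-- Decomposition of injective maps `Fin m → Fin n` as a strictly monotone map
composed with a permutation. -/
noncomputable def splitEquiv (m n : ℕ) :
    ({f : Fin m → Fin n // StrictMono f} × Equiv.Perm (Fin m)) ≃
      {p : Fin m → Fin n // Function.Injective p} :=
  Equiv.ofBijective (fun x => ⟨x.1.1 ∘ x.2, x.1.2.injective.comp x.2.injective⟩) (by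
    constructor
    · rintro ⟨⟨f, hf⟩, τ⟩ ⟨⟨g, hg⟩, σ⟩ h
      have h' : f ∘ ⇑τ = g ∘ ⇑σ := congrArg Subtype.val h
      set s : Finset (Fin n) := Finset.univ.image (g ∘ ⇑σ) with hs_def
      have hs : s.card = m := by
        rw [hs_def, Finset.card_image_of_injective _ (hg.injective.comp σ.injective),
          Finset.card_univ, Fintype.card_fin]
      have hfs : ∀ x, f x ∈ s := by
        intro x
        have h1 : f x = (g ∘ ⇑σ) (τ.symm x) := by
          have := congrFun h' (τ.symm x)
          simpa using this
        rw [h1]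
        exact Finset.mem_image_of_mem _ (Finset.mem_univ _)
      have hgs : ∀ x, g x ∈ s := by
        intro x
        have h1 : g x = (g ∘ ⇑σ) (σ.symm x) := by simp
        rw [h1]
        exact Finset.mem_image_of_mem _ (Finset.mem_univ _)
      have hfg : f = g :=
        (Finset.orderEmbOfFin_unique hs hfs hf).trans
          (Finset.orderEmbOfFin_unique hs hgs hg).symm
      have hτσ : τ = σ := by
        apply Equiv.coe_fn_injective
        funext i
        apply hg.injective
        have := congrFun h' i
        rw [hfg] at this
        exact this
      simp [hfg, hτσ]
    · rintro ⟨p, hp⟩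
      set s : Finset (Fin n) := Finset.univ.image p with hs_def
      have hs : s.card = m := by
        rw [hs_def, Finset.card_image_of_injective _ hp, Finset.card_univ, Fintype.card_fin]
      have hmem : ∀ i, p i ∈ s := fun i => Finset.mem_image_of_mem _ (Finset.mem_univ _)
      set t : Fin m → Fin m := fun i => (s.orderIsoOfFin hs).symm ⟨p i, hmem i⟩ with ht_def
      have ht : Function.Injective t := by
        intro a b hab
        apply hp
        have h2 := congrArg (s.orderIsoOfFin hs) hab
        simp only [ht_def, OrderIso.apply_symm_apply] at h2
        exact congrArg Subtype.val h2
      refine ⟨⟨⟨fun i => s.orderEmbOfFin hs i, (s.orderEmbOfFin hs).strictMono⟩,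
        Equiv.ofBijective t (Finite.injective_iff_bijective.1 ht)⟩, ?_⟩
      apply Subtype.ext
      funext i
      show s.orderEmbOfFin hs (t i) = p i
      rw [← Finset.coe_orderIsoOfFin_apply]
      show ((s.orderIsoOfFin hs) ((s.orderIsoOfFin hs).symm ⟨p i, hmem i⟩) : Fin n) = p i
      rw [OrderIso.apply_symm_apply])

/-- Strictly monotone maps `Fin m → Fin n` correspond to `m`-element subsets of `Fin n`. -/
noncomputable def monoEquivFinset (m n : ℕ) :
    {f : Fin m → Fin n // StrictMono f} ≃ {s : Finset (Fin n) // s.card = m} where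
  toFun f := ⟨Finset.univ.image f.1, by
    rw [Finset.card_image_of_injective _ f.2.injective, Finset.card_univ, Fintype.card_fin]⟩
  invFun s := ⟨fun i => s.1.orderEmbOfFin s.2 i, (s.1.orderEmbOfFin s.2).strictMono⟩
  left_inv f := by
    apply Subtype.ext
    exact (Finset.orderEmbOfFin_unique _
      (fun x => Finset.mem_image_of_mem _ (Finset.mem_univ _)) f.2).symm
  right_inv s := by
    apply Subtype.ext
    apply Finset.coe_injective
    rw [Finset.coe_image, Finset.coe_univ, Set.image_univ]
    exact Finset.range_orderEmbOfFin s.1 s.2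

theorem card_strictMono_fin (m n : ℕ) :
    Fintype.card {f : Fin m → Fin n // StrictMono f} = n.choose m := by
  rw [Fintype.card_congr (monoEquivFinset m n), Fintype.card_finset_len, Fintype.card_fin]

/-- The Cauchy–Binet formula over `ℤ`. -/
theorem cauchy_binet (A : Matrix (Fin m) (Fin n) ℤ) (B : Matrix (Fin n) (Fin m) ℤ) :
    (A * B).det = ∑ f : {f : Fin m → Fin n // StrictMono f},
      (A.submatrix id f.1).det * (B.submatrix f.1 id).det := by
  classical
  have hdetA : ∀ p : Fin m → Fin n, (A.submatrix id p).det =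
      ∑ σ : Equiv.Perm (Fin m), ((Equiv.Perm.sign σ : ℤˣ) : ℤ) * ∏ i, A (σ i) (p i) := by
    intro p
    rw [det_apply']
    simp [Matrix.submatrix_apply]
  have hdetB : ∀ p : Fin m → Fin n, (B.submatrix p id).det =
      ∑ σ : Equiv.Perm (Fin m), ((Equiv.Perm.sign σ : ℤˣ) : ℤ) * ∏ i, B (p (σ i)) i := by
    intro p
    rw [det_apply']
    simp [Matrix.submatrix_apply]
  have step1 : (A * B).det =
      ∑ p : Fin m → Fin n, (∏ i, B (p i) i) * (A.submatrix id p).det := by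
    calc (A * B).det
        = ∑ p : Fin m → Fin n, ∑ σ : Equiv.Perm (Fin m),
            ((Equiv.Perm.sign σ : ℤˣ) : ℤ) * ∏ i, A (σ i) (p i) * B (p i) i := by
          simp only [det_apply', Matrix.mul_apply, Finset.prod_univ_sum, Finset.mul_sum,
            Fintype.piFinset_univ, Int.cast_id]
          rw [Finset.sum_comm]
      _ = ∑ p : Fin m → Fin n, (∏ i, B (p i) i) * (A.submatrix id p).det := by
          refine Finset.sum_congr rfl fun p _ => ?_
          rw [hdetA, Finset.mul_sum]
          refine Finset.sum_congr rfl fun σ _ => ?_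
          rw [Finset.prod_mul_distrib]
          ring
  have hzero : ∀ p : Fin m → Fin n, ¬ Function.Injective p →
      (∏ i, B (p i) i) * (A.submatrix id p).det = 0 := by
    intro p hp
    obtain ⟨a, b, hab, hne⟩ := Function.not_injective_iff.1 hp
    have h0 : (A.submatrix id p).det = 0 :=
      Matrix.det_zero_of_column_eq hne (fun k => by simp [Matrix.submatrix_apply, hab])
    rw [h0, mul_zero]
  have step2 : (A * B).det =
      ∑ p : {p : Fin m → Fin n // Function.Injective p},
        (∏ i, B (p.1 i) i) * (A.submatrix id p.1).det := by
    have h2 : (∑ p : {p : Fin m → Fin n // ¬ Function.Injective p},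
        (∏ i, B (p.1 i) i) * (A.submatrix id p.1).det) = 0 :=
      Finset.sum_eq_zero (fun p _ => hzero p.1 p.2)
    rw [step1, ← Fintype.sum_subtype_add_sum_subtype (fun p : Fin m → Fin n =>
      Function.Injective p) (fun p => (∏ i, B (p i) i) * (A.submatrix id p).det), h2, add_zero]
  rw [step2,
    ← Fintype.sum_equiv (splitEquiv m n)
      (fun x => (∏ i, B (((splitEquiv m n) x).1 i) i) *
        (A.submatrix id ((splitEquiv m n) x).1).det)
      (fun p => (∏ i, B (p.1 i) i) * (A.submatrix id p.1).det) (fun x => rfl),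
    Fintype.sum_prod_type]
  refine Finset.sum_congr rfl fun f _ => ?_
  have hsub : ∀ τ : Equiv.Perm (Fin m),
      A.submatrix id (f.1 ∘ ⇑τ) = (A.submatrix id f.1).submatrix id ⇑τ := by
    intro τ
    rw [Matrix.submatrix_submatrix]
    simp
  calc ∑ τ : Equiv.Perm (Fin m),
        (∏ i, B ((f.1 ∘ ⇑τ) i) i) * (A.submatrix id (f.1 ∘ ⇑τ)).det
      = ∑ τ : Equiv.Perm (Fin m),
        (∏ i, B (f.1 (τ i)) i) * (((Equiv.Perm.sign τ : ℤˣ) : ℤ) *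
          (A.submatrix id f.1).det) := by
        refine Finset.sum_congr rfl fun τ _ => ?_
        rw [hsub τ, Matrix.det_permute']
        rfl
    _ = (A.submatrix id f.1).det *
        ∑ τ : Equiv.Perm (Fin m), ((Equiv.Perm.sign τ : ℤˣ) : ℤ) * ∏ i, B (f.1 (τ i)) i := by
        rw [Finset.mul_sum]
        refine Finset.sum_congr rfl fun τ _ => ?_
        ring
    _ = (A.submatrix id f.1).det * (B.submatrix f.1 id).det := by rw [← hdetB]

end Aux

/-- For a Hadamard matrix `H` of order `n` and `n ≥ m > 1`, the sum of squared
minors of order `m` (over all `C(n,m)^2` pairs of strictly monotone index maps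
`Fin m → Fin n`) is strictly greater than `m! * C(n,m)^2`; equivalently, the
mean of `det(M)^2` over all such submatrices exceeds `m!`. -/
theorem sum_sq_minors_hadamard_gt_factorial (n m : ℕ) (hm : 1 < m) (hmn : m ≤ n)
    (H : Matrix (Fin n) (Fin n) ℤ) (hH1 : ∀ i j, H i j = 1 ∨ H i j = -1)
    (hH : H * Hᵀ = (n : ℤ) • (1 : Matrix (Fin n) (Fin n) ℤ)) :
    (m.factorial : ℤ) * (n.choose m : ℤ) ^ 2 <
      ∑ f : {f : Fin m → Fin n // StrictMono f},
        ∑ g : {g : Fin m → Fin n // StrictMono g},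
          (H.submatrix f.1 g.1).det ^ 2 := by
  classical
  have key : ∀ f : {f : Fin m → Fin n // StrictMono f},
      ∑ g : {g : Fin m → Fin n // StrictMono g},
        (H.submatrix f.1 g.1).det ^ 2 = (n : ℤ) ^ m := by
    intro f
    have hcb := cauchy_binet (H.submatrix f.1 id) (Hᵀ.submatrix id f.1)
    have hprod : H.submatrix f.1 id * Hᵀ.submatrix id f.1 =
        (n : ℤ) • (1 : Matrix (Fin m) (Fin m) ℤ) := by
      rw [← Matrix.submatrix_mul H Hᵀ f.1 id f.1 Function.bijective_id, hH]
      ext i j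
      simp only [Matrix.submatrix_apply, Matrix.smul_apply, Matrix.one_apply, smul_eq_mul]
      by_cases h : i = j
      · simp [h]
      · have hne : f.1 i ≠ f.1 j := fun h' => h (f.2.injective h')
        simp [h, hne]
    have hdet : (H.submatrix f.1 id * Hᵀ.submatrix id f.1).det = (n : ℤ) ^ m := by
      rw [hprod, Matrix.det_smul, Matrix.det_one, Fintype.card_fin, mul_one]
    calc ∑ g : {g : Fin m → Fin n // StrictMono g}, (H.submatrix f.1 g.1).det ^ 2
        = ∑ g : {g : Fin m → Fin n // StrictMono g},
            ((H.submatrix f.1 id).submatrix id g.1).det *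
              ((Hᵀ.submatrix id f.1).submatrix g.1 id).det := by
          refine Finset.sum_congr rfl fun g _ => ?_
          rw [Matrix.submatrix_submatrix, Matrix.submatrix_submatrix, Function.comp_id,
            Function.id_comp, ← Matrix.transpose_submatrix, Matrix.det_transpose, pow_two]
      _ = (n : ℤ) ^ m := by rw [← hcb, hdet]
  have htotal : (∑ f : {f : Fin m → Fin n // StrictMono f},
      ∑ g : {g : Fin m → Fin n // StrictMono g}, (H.submatrix f.1 g.1).det ^ 2)
      = (n.choose m : ℤ) * (n : ℤ) ^ m := by
    rw [Finset.sum_congr rfl (fun f _ => key f), Finset.sum_const, Finset.card_univ,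
      card_strictMono_fin, nsmul_eq_mul]
  rw [htotal]
  have hnat : m.factorial * n.choose m ^ 2 < n.choose m * n ^ m := by
    have hC : 0 < n.choose m := Nat.choose_pos hmn
    have hd : n.descFactorial m < n ^ m := by
      obtain ⟨k, rfl⟩ : ∃ k, m = k + 2 := ⟨m - 2, by omega⟩
      calc n.descFactorial (k + 2) = (n - (k + 1)) * n.descFactorial (k + 1) :=
            Nat.descFactorial_succ n (k + 1)
        _ ≤ (n - (k + 1)) * n ^ (k + 1) :=
            Nat.mul_le_mul_left _ (Nat.descFactorial_le_pow n (k + 1))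
        _ < n * n ^ (k + 1) :=
            Nat.mul_lt_mul_of_lt_of_le (Nat.sub_lt (by omega) (by omega)) le_rfl
              (pow_pos (by omega) _)
        _ = n ^ (k + 2) := by ring
    calc m.factorial * n.choose m ^ 2 = n.descFactorial m * n.choose m := by
          rw [pow_two, ← mul_assoc, ← Nat.descFactorial_eq_factorial_mul_choose]
      _ < n ^ m * n.choose m := (Nat.mul_lt_mul_right hC).mpr hd
      _ = n.choose m * n ^ m := Nat.mul_comm _ _
  exact_mod_cast hnat
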